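/- Harrop's rule is superintuitionistic: for distinct propositional variables p, q, r, the formula (¬p→(q∨r))→((¬p→q)∨(¬p→r)) is not derivable in intuitionistic propositional logic, although it is a classical propositional tautology. -/
import Mathlib


/-!
Common framework for proof-theoretic validity (Prawitz / Piecha–Schroeder-Heister style).

* Propositional formulas over countably many atoms (`ℕ`), with `⊥`, `∧`, `∨`, `→`;
  `¬A` abbreviates `A → ⊥`.
* Higher-level atomic rules: a rule has a finite list of premises, each premise being
  a pair of (a finite list of lower-level rules that may be discharged, an atomic
  conclusion), together with an atomic conclusion.  An atomic axiom `p̄` is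
  `HLRule.mk [] p`; an assumption of an atom is identified with its axiom rule.
* `AtDeriv S p`: the atom `p` is derivable using only rules of `S`
  (discharged rules become available).
* `Deriv S Γ φ`: natural deduction NJ augmented with the atomic rules in `S`,
  from hypotheses `Γ`.  `⊢_IPC` is `Deriv ∅ ∅`.
* `Valid 𝔖 S φ` formalizes "there is a closed `S`-valid argument for `φ`" relative to
  the proof-theoretic system `𝔖` (acceptable extensions of `S` are the supersets of `S`
  belonging to `𝔖`).  Unfolding the inductive definition of `S`-validity of arguments
  (atomic case, closed introduction case, closed non-introduction case, open case)
  clause-by-clause on the conclusion yields exactly the following recursion on formulas: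
  a closed valid argument for `A ∧ B` reduces (via the non-introduction case) to one
  ending in `∧`-introduction, i.e. closed valid arguments for `A` and `B`; similarly for
  `∨`; a closed valid argument for `A → B` reduces to one ending in `→`-introduction,
  whose immediate subargument is an open argument of `B` from the assumption `A`, which
  by the open case is valid iff every acceptable extension `S' ∈ 𝔖` of `S` having a
  closed `S'`-valid argument for `A` has one for `B`; a closed valid argument for an
  atom `p` exists iff `p` is `S`-derivable; and for `⊥` (which has no introduction rule,
  and is governed by the rules `⊥/p` for every atom `p`) iff every atom is `S`-derivable.
-/

/-- Propositional formulas over atoms `ℕ`. -/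
inductive PropForm : Type
  | atom : ℕ → PropForm
  | falsum : PropForm
  | conj : PropForm → PropForm → PropForm
  | disj : PropForm → PropForm → PropForm
  | impl : PropForm → PropForm → PropForm
  deriving DecidableEq

/-- `¬A` abbreviates `A → ⊥`. -/
def PropForm.neg (A : PropForm) : PropForm := .impl A .falsum

/-- Higher-level atomic rules. -/
inductive HLRule : Type
  | mk : List (List HLRule × ℕ) → ℕ → HLRule

/-- `AtDeriv S p`: the atom `p` is derivable using only the atomic rules in `S`;
applying a rule requires deriving each premise with its discharged rules made available. -/
inductive AtDeriv : Set HLRule → ℕ → Prop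
  | app (S : Set HLRule) (prems : List (List HLRule × ℕ)) (concl : ℕ)
      (hmem : HLRule.mk prems concl ∈ S)
      (hprem : ∀ pr ∈ prems, AtDeriv (S ∪ {R | R ∈ pr.1}) pr.2) :
      AtDeriv S concl

/-- Natural deduction NJ for intuitionistic propositional logic, augmented with the
atomic rules in `S`, with hypotheses `Γ`.  `Deriv ∅ Γ φ` is `Γ ⊢_IPC φ`. -/
inductive Deriv : Set HLRule → Set PropForm → PropForm → Prop
  | hyp {S : Set HLRule} {Γ : Set PropForm} {A : PropForm} :
      A ∈ Γ → Deriv S Γ A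
  | falsumE {S : Set HLRule} {Γ : Set PropForm} {A : PropForm} :
      Deriv S Γ .falsum → Deriv S Γ A
  | andI {S : Set HLRule} {Γ : Set PropForm} {A B : PropForm} :
      Deriv S Γ A → Deriv S Γ B → Deriv S Γ (.conj A B)
  | andE1 {S : Set HLRule} {Γ : Set PropForm} {A B : PropForm} :
      Deriv S Γ (.conj A B) → Deriv S Γ A
  | andE2 {S : Set HLRule} {Γ : Set PropForm} {A B : PropForm} :
      Deriv S Γ (.conj A B) → Deriv S Γ B
  | orI1 {S : Set HLRule} {Γ : Set PropForm} {A B : PropForm} :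
      Deriv S Γ A → Deriv S Γ (.disj A B)
  | orI2 {S : Set HLRule} {Γ : Set PropForm} {A B : PropForm} :
      Deriv S Γ B → Deriv S Γ (.disj A B)
  | orE {S : Set HLRule} {Γ : Set PropForm} {A B C : PropForm} :
      Deriv S Γ (.disj A B) → Deriv S (insert A Γ) C → Deriv S (insert B Γ) C →
      Deriv S Γ C
  | implI {S : Set HLRule} {Γ : Set PropForm} {A B : PropForm} :
      Deriv S (insert A Γ) B → Deriv S Γ (.impl A B)
  | implE {S : Set HLRule} {Γ : Set PropForm} {A B : PropForm} :
      Deriv S Γ (.impl A B) → Deriv S Γ A → Deriv S Γ B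
  | rule {S : Set HLRule} {Γ : Set PropForm}
      (prems : List (List HLRule × ℕ)) (concl : ℕ) :
      HLRule.mk prems concl ∈ S →
      (∀ pr ∈ prems, Deriv (S ∪ {R | R ∈ pr.1}) Γ (.atom pr.2)) →
      Deriv S Γ (.atom concl)

/-- `⊢_IPC φ` : derivability of `φ` in intuitionistic propositional natural deduction. -/
def IPC (φ : PropForm) : Prop := Deriv ∅ ∅ φ

/-- Auxiliary form of validity, by recursion on the formula. -/
def ValidAux (𝔖 : Set (Set HLRule)) : PropForm → Set HLRule → Prop
  | .atom p, S => AtDeriv S p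
  | .falsum, S => ∀ a : ℕ, AtDeriv S a
  | .conj A B, S => ValidAux 𝔖 A S ∧ ValidAux 𝔖 B S
  | .disj A B, S => ValidAux 𝔖 A S ∨ ValidAux 𝔖 B S
  | .impl A B, S => ∀ S' ∈ 𝔖, S ⊆ S' → ValidAux 𝔖 A S' → ValidAux 𝔖 B S'

/-- `Valid 𝔖 S φ`: relative to the proof-theoretic system `𝔖` (in which the acceptable
extensions of `S` are exactly the supersets of `S` belonging to `𝔖`), there is a closed
`S`-valid argument for `φ`. -/
def Valid (𝔖 : Set (Set HLRule)) (S : Set HLRule) (φ : PropForm) : Prop :=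
  ValidAux 𝔖 φ S

/-- `𝔖 ⊨ φ`: for every `S ∈ 𝔖` there is a closed `S`-valid argument for `φ`
(acceptable extensions taken in `𝔖`). -/
def Models (𝔖 : Set (Set HLRule)) (φ : PropForm) : Prop :=
  ∀ S ∈ 𝔖, Valid 𝔖 S φ

/-- The complete proof-theoretic system: all sets of atomic rules of all levels. -/
def completeSystem : Set (Set HLRule) := Set.univ

/-- `S`-validity of the open one-premise/one-assumption argument from `A` to `B`
(relative to `𝔖`): by the open case, for every acceptable extension `S' ∈ 𝔖` of `S`,
substituting any closed `S'`-valid argument for the assumption `A` yields an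
`S'`-valid closed argument, which (the final step not being an introduction rule)
amounts to the existence of a closed `S'`-valid argument for `B`. -/
def OpenArgValid1 (𝔖 : Set (Set HLRule)) (S : Set HLRule) (A B : PropForm) : Prop :=
  ∀ S' ∈ 𝔖, S ⊆ S' → Valid 𝔖 S' A → Valid 𝔖 S' B

/-- Classical Boolean evaluation of a formula under a valuation `v` (with `⊥ ↦ false`). -/
def PropForm.eval (v : ℕ → Bool) : PropForm → Bool
  | .atom a => v a
  | .falsum => false
  | .conj A B => A.eval v && B.eval v
  | .disj A B => A.eval v || B.eval v
  | .impl A B => !A.eval v || B.eval v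

/-- Accessibility on a 4-element Kripke frame: root `0` below everything. -/
def Kle (w w' : Fin 4) : Prop := w = w' ∨ w = 0

lemma Kle_refl (w : Fin 4) : Kle w w := Or.inl rfl

lemma Kle_trans {w w' w'' : Fin 4} (h : Kle w w') (h' : Kle w' w'') : Kle w w'' := by
  rcases h with rfl | rfl
  · exact h'
  · exact Or.inr rfl

/-- Valuation: `q` at world 1, `r` at world 2, `p` at world 3, nothing at the root. -/
def Kval (p q r : ℕ) (w : Fin 4) (a : ℕ) : Prop :=
  (w = 1 ∧ a = q) ∨ (w = 2 ∧ a = r) ∨ (w = 3 ∧ a = p)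

/-- Kripke forcing. -/
def Kforce (p q r : ℕ) : Fin 4 → PropForm → Prop
  | w, .atom a => Kval p q r w a
  | _, .falsum => False
  | w, .conj A B => Kforce p q r w A ∧ Kforce p q r w B
  | w, .disj A B => Kforce p q r w A ∨ Kforce p q r w B
  | w, .impl A B => ∀ w', Kle w w' → Kforce p q r w' A → Kforce p q r w' B

lemma Kmono (p q r : ℕ) (A : PropForm) :
    ∀ {w w' : Fin 4}, Kle w w' → Kforce p q r w A → Kforce p q r w' A := by
  induction A with
  | atom a =>
    intro w w' h hA
    rcases h with rfl | rfl
    · exact hA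
    · rcases hA with ⟨h1, _⟩ | ⟨h1, _⟩ | ⟨h1, _⟩ <;> exact absurd h1 (by decide)
  | falsum => intro w w' _ hA; exact hA.elim
  | conj A B ihA ihB => intro w w' h hA; exact ⟨ihA h hA.1, ihB h hA.2⟩
  | disj A B ihA ihB =>
    intro w w' h hA
    rcases hA with hA | hA
    · exact Or.inl (ihA h hA)
    · exact Or.inr (ihB h hA)
  | impl A B ihA ihB =>
    intro w w' h hA w'' h' hA'
    exact hA w'' (Kle_trans h h') hA'

lemma Ksound (p q r : ℕ) {S : Set HLRule} {Γ : Set PropForm} {φ : PropForm}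
    (h : Deriv S Γ φ) : S = ∅ →
    ∀ w, (∀ A ∈ Γ, Kforce p q r w A) → Kforce p q r w φ := by
  induction h with
  | hyp hA => intro _ w hΓ; exact hΓ _ hA
  | falsumE h ih => intro hS w hΓ; exact (ih hS w hΓ).elim
  | andI h1 h2 ih1 ih2 => intro hS w hΓ; exact ⟨ih1 hS w hΓ, ih2 hS w hΓ⟩
  | andE1 h ih => intro hS w hΓ; exact (ih hS w hΓ).1
  | andE2 h ih => intro hS w hΓ; exact (ih hS w hΓ).2
  | orI1 h ih => intro hS w hΓ; exact Or.inl (ih hS w hΓ)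
  | orI2 h ih => intro hS w hΓ; exact Or.inr (ih hS w hΓ)
  | orE h1 h2 h3 ih1 ih2 ih3 =>
    intro hS w hΓ
    rcases ih1 hS w hΓ with hA | hB
    · exact ih2 hS w (by
        intro C hC
        rcases Set.mem_insert_iff.1 hC with rfl | hC
        · exact hA
        · exact hΓ _ hC)
    · exact ih3 hS w (by
        intro C hC
        rcases Set.mem_insert_iff.1 hC with rfl | hC
        · exact hB
        · exact hΓ _ hC)
  | implI h ih =>
    intro hS w hΓ w' hle hA
    exact ih hS w' (by
      intro C hC
      rcases Set.mem_insert_iff.1 hC with rfl | hC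
      · exact hA
      · exact Kmono p q r C hle (hΓ _ hC))
  | implE h1 h2 ih1 ih2 =>
    intro hS w hΓ
    exact ih1 hS w hΓ w (Kle_refl w) (ih2 hS w hΓ)
  | rule prems concl hmem _ _ =>
    intro hS
    rw [hS] at hmem
    exact hmem.elim

/-- **Harrop's rule is superintuitionistic.**  For distinct propositional variables
`p, q, r`, the formula `(¬p → (q ∨ r)) → ((¬p → q) ∨ (¬p → r))` is not derivable in
intuitionistic propositional logic, although it is a classical tautology. -/
theorem harrop_superintuitionistic (p q r : ℕ)
    (hpq : p ≠ q) (hpr : p ≠ r) (hqr : q ≠ r) :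
    ¬ IPC (.impl (.impl (PropForm.neg (.atom p)) (.disj (.atom q) (.atom r)))
            (.disj (.impl (PropForm.neg (.atom p)) (.atom q))
                   (.impl (PropForm.neg (.atom p)) (.atom r)))) ∧
      ∀ v : ℕ → Bool,
        PropForm.eval v
          (.impl (.impl (PropForm.neg (.atom p)) (.disj (.atom q) (.atom r)))
            (.disj (.impl (PropForm.neg (.atom p)) (.atom q))
                   (.impl (PropForm.neg (.atom p)) (.atom r)))) = true := by
  constructor
  · intro hIPC
    have H := Ksound p q r hIPC rfl 0 (fun A hA => hA.elim)
    simp only [Kforce] at H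
    -- The antecedent `¬p → (q ∨ r)` is forced at the root.
    have hAnt : Kforce p q r 0 (.impl (PropForm.neg (.atom p)) (.disj (.atom q) (.atom r))) := by
      simp only [Kforce, PropForm.neg]
      intro w' _ hnp
      fin_cases w'
      · exact (hnp 3 (Or.inr rfl) (Or.inr (Or.inr ⟨rfl, rfl⟩))).elim
      · exact Or.inl (Or.inl ⟨rfl, rfl⟩)
      · exact Or.inr (Or.inr (Or.inl ⟨rfl, rfl⟩))
      · exact (hnp 3 (Kle_refl 3) (Or.inr (Or.inr ⟨rfl, rfl⟩))).elim
    have H2 := H 0 (Kle_refl 0) hAnt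
    -- `¬p` is forced at worlds 1 and 2.
    have hnp1 : Kforce p q r 1 (PropForm.neg (.atom p)) := by
      simp only [Kforce, PropForm.neg]
      intro w' hle hp
      rcases hle with rfl | h
      · rcases hp with ⟨_, h2⟩ | ⟨h1, _⟩ | ⟨h1, _⟩
        · exact hpq h2
        · exact absurd h1 (by decide)
        · exact absurd h1 (by decide)
      · exact absurd h (by decide)
    have hnp2 : Kforce p q r 2 (PropForm.neg (.atom p)) := by
      simp only [Kforce, PropForm.neg]
      intro w' hle hp
      rcases hle with rfl | h
      · rcases hp with ⟨h1, _⟩ | ⟨_, h2⟩ | ⟨h1, _⟩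
        · exact absurd h1 (by decide)
        · exact hpr h2
        · exact absurd h1 (by decide)
      · exact absurd h (by decide)
    rcases H2 with h | h
    · -- `¬p → q` fails at world 2
      have := h 2 (Or.inr rfl) hnp2
      rcases this with ⟨h1, _⟩ | ⟨_, h2⟩ | ⟨h1, _⟩
      · exact absurd h1 (by decide)
      · exact hqr h2
      · exact absurd h1 (by decide)
    · -- `¬p → r` fails at world 1
      have := h 1 (Or.inr rfl) hnp1
      rcases this with ⟨_, h2⟩ | ⟨h1, _⟩ | ⟨h1, _⟩
      · exact hqr h2.symm
      · exact absurd h1 (by decide)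
      · exact absurd h1 (by decide)
  · intro v
    simp only [PropForm.eval, PropForm.neg]
    cases v p <;> cases v q <;> cases v r <;> simp
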